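/- Let p be an odd prime such that 2 is a primitive root modulo p, let θ be a primitive p-th root of unity in an algebraic closure of F₂, and let G(X) ∈ F₂[X] with 1 ≤ deg G < p. Then G(θ) = 1 if and only if G(X) = X + X² + ⋯ + X^{p−1}. -/

import Mathlib

open Polynomial IntermediateField

theorem stmt_8 (p : ℕ) (hp : p.Prime) (hodd : Odd p)
    (h2 : orderOf (2 : ZMod p) = p - 1)
    (θ : AlgebraicClosure (ZMod 2)) (hθ : IsPrimitiveRoot θ p)
    (G : Polynomial (ZMod 2)) (hG1 : 1 ≤ G.natDegree) (hGp : G.natDegree < p) :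
    Polynomial.aeval θ G = 1 ↔ G = ∑ i ∈ Finset.Ico 1 p, Polynomial.X ^ i := by
  have hppos : 0 < p := hp.pos
  have hp1 : 1 < p := hp.one_lt
  haveI : Fact p.Prime := ⟨hp⟩
  -- θ is integral
  have hint : IsIntegral (ZMod 2) θ := Algebra.IsIntegral.isIntegral θ
  -- cyclotomic facts
  set Φ : Polynomial (ZMod 2) := Polynomial.cyclotomic p (ZMod 2) with hΦdef
  have hΦmonic : Φ.Monic := Polynomial.cyclotomic.monic p (ZMod 2)
  have hΦdeg : Φ.natDegree = p - 1 := by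
    rw [hΦdef, Polynomial.natDegree_cyclotomic, Nat.totient_prime hp]
  have hΦroot : Polynomial.aeval θ Φ = 0 := by
    have := hθ.isRoot_cyclotomic hppos
    rwa [Polynomial.aeval_def, ← Polynomial.eval_map, Polynomial.map_cyclotomic,
      ← Polynomial.IsRoot.def]
  -- minpoly divides Φ
  have hmdvd : minpoly (ZMod 2) θ ∣ Φ := minpoly.dvd _ _ hΦroot
  have hmmonic : (minpoly (ZMod 2) θ).Monic := minpoly.monic hint
  have hΦne : Φ ≠ 0 := hΦmonic.ne_zero
  set d := (minpoly (ZMod 2) θ).natDegree with hd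
  have hdle : d ≤ p - 1 := hΦdeg ▸ Polynomial.natDegree_le_of_dvd hmdvd hΦne
  -- finrank of adjoin
  haveI : FiniteDimensional (ZMod 2) (IntermediateField.adjoin (ZMod 2) {θ}) :=
    IntermediateField.adjoin.finiteDimensional hint
  have hfr : Module.finrank (ZMod 2) (ZMod 2)⟮θ⟯ = d :=
    IntermediateField.adjoin.finrank hint
  haveI : Finite (ZMod 2)⟮θ⟯ := Module.finite_of_finite (ZMod 2)
  haveI : Fintype (ZMod 2)⟮θ⟯ := Fintype.ofFinite _
  have hcard : Fintype.card (ZMod 2)⟮θ⟯ = 2 ^ d := by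
    rw [Module.card_eq_pow_finrank (K := ZMod 2), hfr, ZMod.card]
  -- the generator
  set g : (ZMod 2)⟮θ⟯ := IntermediateField.AdjoinSimple.gen (ZMod 2) θ with hg
  have hgθ : (g : AlgebraicClosure (ZMod 2)) = θ := rfl
  have hgne : g ≠ 0 := by
    intro h
    have : θ = 0 := by rw [← hgθ, h]; simp
    exact (hθ.ne_zero hppos.ne') this
  have hgpow : g ^ (2 ^ d - 1) = 1 := by
    rw [← hcard]
    exact FiniteField.pow_card_sub_one_eq_one g hgne
  have horderg : orderOf g = p := by
    have : orderOf θ = p := (hθ.eq_orderOf).symm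
    rw [← this]
    exact (orderOf_injective (algebraMap (ZMod 2)⟮θ⟯ (AlgebraicClosure (ZMod 2))).toMonoidHom
      (algebraMap (ZMod 2)⟮θ⟯ (AlgebraicClosure (ZMod 2))).injective g).symm
  have hpdvd : p ∣ 2 ^ d - 1 := by
    rw [← horderg]; exact orderOf_dvd_of_pow_eq_one hgpow
  -- order of 2 mod p divides d
  have h2d : (2 : ZMod p) ^ d = 1 := by
    have h1le : 1 ≤ 2 ^ d := Nat.one_le_two_pow
    have : ((2 ^ d - 1 : ℕ) : ZMod p) = 0 := (ZMod.natCast_eq_zero_iff _ _).2 hpdvd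
    have h2 : ((2 ^ d : ℕ) : ZMod p) = 1 := by
      have := sub_eq_zero.mp (by rwa [Nat.cast_sub h1le, Nat.cast_one] at this)
      simpa using this
    push_cast at h2
    exact h2
  have hdge : p - 1 ∣ d := by rw [← h2]; exact orderOf_dvd_of_pow_eq_one h2d
  have hdpos : 0 < d := minpoly.natDegree_pos hint
  have hdeq : d = p - 1 := Nat.eq_of_dvd_of_lt_two_mul hdpos.ne' hdge
    (by omega)
  -- minpoly = Φ
  have hmin : minpoly (ZMod 2) θ = Φ := by
    have := Polynomial.eq_of_monic_of_dvd_of_natDegree_le hmmonic hΦmonic hmdvd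
      (by rw [hΦdeg, ← hdeq])
    exact this.symm
  -- Φ = 1 + S
  have hΦsum : Φ = 1 + ∑ i ∈ Finset.Ico 1 p, Polynomial.X ^ i := by
    rw [hΦdef, Polynomial.cyclotomic_prime (ZMod 2) p, Finset.range_eq_Ico,
      Finset.sum_eq_sum_Ico_succ_bot hppos]
    simp
  have hchar : (1 : Polynomial (ZMod 2)) + 1 = 0 := by
    norm_num
    exact Polynomial.C_eq_zero.mpr rfl
  constructor
  · intro hGθ
    have hroot : Polynomial.aeval θ (G + 1) = 0 := by
      rw [map_add, hGθ, map_one]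
      have : (1 : AlgebraicClosure (ZMod 2)) + 1 = 0 := by
        have := CharP.cast_eq_zero (AlgebraicClosure (ZMod 2)) 2
        push_cast at this
        linear_combination this
      exact this
    have hdvd : minpoly (ZMod 2) θ ∣ G + 1 := minpoly.dvd _ _ hroot
    rw [hmin] at hdvd
    have hG1deg : (G + 1).natDegree = G.natDegree := by
      have : (G + 1) = G + Polynomial.C 1 := by rw [map_one]
      rw [this, Polynomial.natDegree_add_C]
    have hGne : (G + 1) ≠ 0 := fun h => by
      have : G = 1 := by
        have := congrArg (· + 1) h
        simpa [add_assoc, hchar] using this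
      rw [this] at hG1; simp at hG1
    have hG1monic : (G + 1).Monic := by
      have hc := Polynomial.leadingCoeff_ne_zero.mpr hGne
      have hall : ∀ c : ZMod 2, c ≠ 0 → c = 1 := by decide
      exact hall _ hc
    have hGeq : G + 1 = Φ := Polynomial.eq_of_monic_of_dvd_of_natDegree_le hΦmonic hG1monic hdvd
      (by rw [hΦdeg, hG1deg]; omega)
    have := congrArg (· + 1) hGeq
    simp only [add_assoc, hchar, add_zero] at this
    rw [this, hΦsum]
    linear_combination hchar
  · intro hGeq
    have : Polynomial.aeval θ Φ = Polynomial.aeval θ (1 + G) := by rw [hΦsum, hGeq]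
    rw [hΦroot, map_add, map_one] at this
    have h1 : (1 : AlgebraicClosure (ZMod 2)) + 1 = 0 := by
      have := CharP.cast_eq_zero (AlgebraicClosure (ZMod 2)) 2
      push_cast at this
      linear_combination this
    linear_combination -this - h1
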